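/- Let γ be an operation on a topological space X. A subset A of X is γ*-semi-open if and only if A ∩ sbd_γ*(A) = ∅. -/

import Mathlib

open Set

/-- An operation on a topological space: `V ⊆ γ V` for every open `V`. -/
def OperationOn {X : Type*} [TopologicalSpace X] (γ : Set X → Set X) : Prop :=
  ∀ V : Set X, IsOpen V → V ⊆ γ V

/-- The γ-interior of a set. -/
def gInt {X : Type*} [TopologicalSpace X] (γ : Set X → Set X) (A : Set X) : Set X :=
  {x | x ∈ A ∧ ∃ N : Set X, IsOpen N ∧ x ∈ N ∧ γ N ⊆ A}

/-- A set is γ-open iff it equals its γ-interior. -/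
def GOpen {X : Type*} [TopologicalSpace X] (γ : Set X → Set X) (A : Set X) : Prop :=
  A = gInt γ A

/-- A set is γ-closed iff its complement is γ-open. -/
def GClosed {X : Type*} [TopologicalSpace X] (γ : Set X → Set X) (A : Set X) : Prop :=
  GOpen γ Aᶜ

/-- The γ-closure of a set. -/
def gCl {X : Type*} [TopologicalSpace X] (γ : Set X → Set X) (A : Set X) : Set X :=
  {x | ∀ U : Set X, IsOpen U → x ∈ U → (γ U ∩ A).Nonempty}

/-- The γ-boundary of a set. -/
def gBd {X : Type*} [TopologicalSpace X] (γ : Set X → Set X) (A : Set X) : Set X :=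
  gCl γ A ∩ gCl γ Aᶜ

/-- A set is γ*-semi-open iff there is a γ-open `O` with `O ⊆ A ⊆ gCl γ O`. -/
def GSemiOpen {X : Type*} [TopologicalSpace X] (γ : Set X → Set X) (A : Set X) : Prop :=
  ∃ O : Set X, GOpen γ O ∧ O ⊆ A ∧ A ⊆ gCl γ O

/-- A set is γ*-semi-closed iff its complement is γ*-semi-open. -/
def GSemiClosed {X : Type*} [TopologicalSpace X] (γ : Set X → Set X) (A : Set X) : Prop :=
  GSemiOpen γ Aᶜ

/-- The γ*-semi-closure: intersection of all γ*-semi-closed sets containing `A`. -/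
def sCl {X : Type*} [TopologicalSpace X] (γ : Set X → Set X) (A : Set X) : Set X :=
  ⋂₀ {F : Set X | GSemiClosed γ F ∧ A ⊆ F}

/-- The γ*-semi-interior: union of all γ*-semi-open sets contained in `A`. -/
def sInt {X : Type*} [TopologicalSpace X] (γ : Set X → Set X) (A : Set X) : Set X :=
  ⋃₀ {O : Set X | GSemiOpen γ O ∧ O ⊆ A}

/-- The γ*-semi-boundary. -/
def sBd {X : Type*} [TopologicalSpace X] (γ : Set X → Set X) (A : Set X) : Set X :=
  sCl γ A ∩ sCl γ Aᶜ

/-- The γ*-semi-exterior. -/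
def sExt {X : Type*} [TopologicalSpace X] (γ : Set X → Set X) (A : Set X) : Set X :=
  sInt γ Aᶜ

/-- γ is a regular operation. -/
def RegularOp {X : Type*} [TopologicalSpace X] (γ : Set X → Set X) : Prop :=
  ∀ (x : X) (U V : Set X), IsOpen U → IsOpen V → x ∈ U → x ∈ V →
    ∃ W : Set X, IsOpen W ∧ x ∈ W ∧ γ W ⊆ γ U ∩ γ V

/-- γ is an open operation. -/
def OpenOp {X : Type*} [TopologicalSpace X] (γ : Set X → Set X) : Prop :=
  ∀ (x : X) (U : Set X), IsOpen U → x ∈ U →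
    ∃ B : Set X, GOpen γ B ∧ x ∈ B ∧ B ⊆ γ U

/-- A set is semi-open in the sense of Levine. -/
def SemiOpenL {X : Type*} [TopologicalSpace X] (S : Set X) : Prop :=
  ∃ O : Set X, IsOpen O ∧ O ⊆ S ∧ S ⊆ closure O

/-- γ is a semi-regular operation. -/
def SemiRegularOp {X : Type*} [TopologicalSpace X] (γ : Set X → Set X) : Prop :=
  ∀ (x : X) (U V : Set X), SemiOpenL U → SemiOpenL V → x ∈ U → x ∈ V →
    ∃ W : Set X, SemiOpenL W ∧ x ∈ W ∧ γ W ⊆ γ U ∩ γ V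

/-- `f` is γ-semi-continuous: preimages of γ-open sets are γ*-semi-open. -/
def GSemiContinuous {X Y : Type*} [TopologicalSpace X] [TopologicalSpace Y]
    (γX : Set X → Set X) (γY : Set Y → Set Y) (f : X → Y) : Prop :=
  ∀ B : Set Y, GOpen γY B → GSemiOpen γX (f ⁻¹' B)

/-- `f` is γ-semi-open: images of γ-open sets are γ*-semi-open. -/
def GSemiOpenMap {X Y : Type*} [TopologicalSpace X] [TopologicalSpace Y]
    (γX : Set X → Set X) (γY : Set Y → Set Y) (f : X → Y) : Prop :=
  ∀ U : Set X, GOpen γX U → GSemiOpen γY (f '' U)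

lemma gOpen_sUnion' {X : Type*} [TopologicalSpace X] (γ : Set X → Set X)
    (S : Set (Set X)) (h : ∀ O ∈ S, GOpen γ O) : GOpen γ (⋃₀ S) := by
  apply Set.Subset.antisymm
  · rintro x ⟨O, hO, hxO⟩
    have hg := h O hO
    rw [hg] at hxO
    obtain ⟨hxO', N, hN, hxN, hγ⟩ := hxO
    exact ⟨⟨O, hO, hxO'⟩, N, hN, hxN, hγ.trans (Set.subset_sUnion_of_mem hO)⟩
  · intro x hx; exact hx.1

lemma gSemiOpen_sUnion' {X : Type*} [TopologicalSpace X] (γ : Set X → Set X)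
    (S : Set (Set X)) (h : ∀ A ∈ S, GSemiOpen γ A) : GSemiOpen γ (⋃₀ S) := by
  set T := {O : Set X | GOpen γ O ∧ ∃ A ∈ S, O ⊆ A ∧ A ⊆ gCl γ O} with hT
  refine ⟨⋃₀ T, gOpen_sUnion' γ T (fun O hO => hO.1), ?_, ?_⟩
  · rintro x ⟨O, ⟨_, A, hA, hOA, _⟩, hxO⟩; exact ⟨A, hA, hOA hxO⟩
  · rintro x ⟨A, hA, hxA⟩
    obtain ⟨O, hOg, hOA, hAcl⟩ := h A hA
    have hOT : O ∈ T := ⟨hOg, A, hA, hOA, hAcl⟩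
    intro U hU hxU
    obtain ⟨y, hy1, hy2⟩ := hAcl hxA U hU hxU
    exact ⟨y, hy1, O, hOT, hy2⟩

theorem stmt4 {X : Type*} [TopologicalSpace X] (gamma : Set X -> Set X)
    (hop : OperationOn gamma) (A : Set X) :
    GSemiOpen gamma A ↔ A ∩ sBd gamma A = ∅ := by
  have hsubCl : ∀ B : Set X, B ⊆ sCl gamma B := by
    intro B x hx F hF
    exact hF.2 hx
  constructor
  · intro hA
    have hcl : sCl gamma Aᶜ ⊆ Aᶜ := fun x hx =>
      hx Aᶜ ⟨by simpa [GSemiClosed, compl_compl] using hA, Set.Subset.rfl⟩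
    apply Set.eq_empty_of_subset_empty
    rintro x ⟨hxA, _, hx2⟩
    exact hcl hx2 hxA
  · intro h
    have hclA : sCl gamma Aᶜ = Aᶜ := by
      apply Set.Subset.antisymm _ (hsubCl Aᶜ)
      intro x hx
      by_contra hxA
      rw [Set.notMem_compl_iff] at hxA
      have : x ∈ A ∩ sBd gamma A := ⟨hxA, hsubCl A hxA, hx⟩
      rw [h] at this
      exact this
    have hAeq : A = ⋃₀ (compl '' {F : Set X | GSemiClosed gamma F ∧ Aᶜ ⊆ F}) := by
      rw [← Set.compl_sInter]
      have : sCl gamma Aᶜ = ⋂₀ {F : Set X | GSemiClosed gamma F ∧ Aᶜ ⊆ F} := rfl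
      rw [← this, hclA, compl_compl]
    rw [hAeq]
    apply gSemiOpen_sUnion'
    rintro B ⟨F, hF, rfl⟩
    exact hF.1
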